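/- Let A be a real symmetric n×n matrix and B a real n×n matrix with B + Bᵀ positive definite. Then every eigenvalue of B⁻¹A lying on the imaginary axis is zero; that is, if B⁻¹A v = iτ v with τ real nonzero and v a complex vector, then v = 0. -/

import Mathlib

open Matrix Complex

private lemma quad_re {n : ℕ} (M : Matrix (Fin n) (Fin n) ℝ) (v : Fin n → ℂ) :
    ((star v) ⬝ᵥ (M.map (algebraMap ℝ ℂ)).mulVec v).re
      = (fun i => (v i).re) ⬝ᵥ M.mulVec (fun i => (v i).re)
        + (fun i => (v i).im) ⬝ᵥ M.mulVec (fun i => (v i).im) := by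
  simp only [dotProduct, mulVec, Pi.star_apply, Finset.mul_sum, Matrix.map_apply,
    Complex.re_sum]
  rw [← Finset.sum_add_distrib]
  refine Finset.sum_congr rfl fun i _ => ?_
  rw [← Finset.sum_add_distrib]
  refine Finset.sum_congr rfl fun j _ => ?_
  simp [Complex.mul_re, Complex.star_def]

private lemma quad_im {n : ℕ} (M : Matrix (Fin n) (Fin n) ℝ) (hM : M.IsSymm)
    (v : Fin n → ℂ) :
    ((star v) ⬝ᵥ (M.map (algebraMap ℝ ℂ)).mulVec v).im = 0 := by
  have h2 : ∀ i j : Fin n, M i j = M j i := fun i j => (hM.apply i j).symm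
  have e : ∀ i j : Fin n, (star (v i) * ((algebraMap ℝ ℂ) (M i j) * v j)).im
      = M i j * ((v i).re * (v j).im - (v i).im * (v j).re) := by
    intro i j
    simp [Complex.mul_im, Complex.star_def]
    ring
  simp only [dotProduct, mulVec, Pi.star_apply, Finset.mul_sum, Matrix.map_apply,
    Complex.im_sum, e]
  set g : Fin n → Fin n → ℝ := fun i j => M i j * ((v i).re * (v j).im - (v i).im * (v j).re)
    with hg
  have hanti : ∀ i j, g i j = -g j i := by
    intro i j
    simp only [hg]
    rw [h2 i j]
    ring
  have key : (∑ i : Fin n, ∑ j : Fin n, g i j) = -(∑ i : Fin n, ∑ j : Fin n, g i j) := by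
    calc (∑ i : Fin n, ∑ j : Fin n, g i j)
        = ∑ i : Fin n, ∑ j : Fin n, -(g j i) :=
          Finset.sum_congr rfl fun i _ => Finset.sum_congr rfl fun j _ => hanti i j
      _ = -(∑ i : Fin n, ∑ j : Fin n, g j i) := by
          simp [Finset.sum_neg_distrib]
      _ = -(∑ i : Fin n, ∑ j : Fin n, g i j) := by rw [Finset.sum_comm]
  linarith [key]

private lemma transpose_quad {n : ℕ} (B : Matrix (Fin n) (Fin n) ℝ) (x : Fin n → ℝ) :
    x ⬝ᵥ Bᵀ *ᵥ x = x ⬝ᵥ B *ᵥ x := by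
  rw [Matrix.mulVec_transpose, dotProduct_comm, ← Matrix.dotProduct_mulVec]

/-- If `A` is a real symmetric `n×n` matrix and `B` a real `n×n` matrix with `B + Bᵀ`
positive definite, then every eigenvalue of `B⁻¹A` on the imaginary axis is zero:
if `B⁻¹A v = iτ v` with `τ` real nonzero, then `v = 0`. -/
theorem stmt0 {n : ℕ} (A B : Matrix (Fin n) (Fin n) ℝ)
    (hA : A.IsSymm) (hB : (B + Bᵀ).PosDef)
    (τ : ℝ) (hτ : τ ≠ 0) (v : Fin n → ℂ)
    (hv : ((B.map (algebraMap ℝ ℂ))⁻¹ * (A.map (algebraMap ℝ ℂ))).mulVec v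
      = (Complex.I * (τ : ℂ)) • v) :
    v = 0 := by
  set A' := A.map (algebraMap ℝ ℂ) with hA'
  set B' := B.map (algebraMap ℝ ℂ) with hB'
  -- B is invertible
  have hdetB : IsUnit B'.det := by
    have hdet : B.det ≠ 0 := by
      intro h
      obtain ⟨x, hx0, hxB⟩ := (Matrix.exists_mulVec_eq_zero_iff).2 h
      have hpos := hB.dotProduct_mulVec_pos hx0
      have hz : x ⬝ᵥ (B + Bᵀ) *ᵥ x = 0 := by
        rw [Matrix.add_mulVec, dotProduct_add, hxB, dotProduct_zero,
          Matrix.mulVec_transpose, dotProduct_comm, ← Matrix.dotProduct_mulVec, hxB,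
          dotProduct_zero]
        ring
      simp [hz] at hpos
    have : B'.det = algebraMap ℝ ℂ B.det := by
      rw [hB', ← RingHom.mapMatrix_apply, ← RingHom.map_det]
    rw [this]
    simp [hdet]
  -- A' v = iτ B' v
  have h1 : A'.mulVec v = (Complex.I * (τ : ℂ)) • (B'.mulVec v) := by
    have := congrArg (fun w => B'.mulVec w) hv
    simp only [Matrix.mulVec_mulVec, Matrix.mulVec_smul] at this
    rwa [Matrix.mul_nonsing_inv_cancel_left _ _ hdetB] at this
  -- take quadratic forms
  have h2 : (star v) ⬝ᵥ A'.mulVec v = (Complex.I * (τ : ℂ)) * ((star v) ⬝ᵥ B'.mulVec v) := by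
    rw [h1, dotProduct_smul, smul_eq_mul]
  have hAim : ((star v) ⬝ᵥ A'.mulVec v).im = 0 := quad_im A hA v
  have hBre : ((star v) ⬝ᵥ B'.mulVec v).re = 0 := by
    have : ((Complex.I * (τ : ℂ)) * ((star v) ⬝ᵥ B'.mulVec v)).im
        = τ * ((star v) ⬝ᵥ B'.mulVec v).re := by
      simp [Complex.mul_im, Complex.mul_re]
    rw [← h2, hAim] at this
    exact (mul_eq_zero.1 this.symm).resolve_left hτ
  -- conclude via positive definiteness
  set x : Fin n → ℝ := fun i => (v i).re with hx
  set y : Fin n → ℝ := fun i => (v i).im with hy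
  have hq : x ⬝ᵥ B.mulVec x + y ⬝ᵥ B.mulVec y = 0 := by
    rw [← quad_re B v]; exact hBre
  have hBBx : ∀ z : Fin n → ℝ, z ⬝ᵥ (B + Bᵀ) *ᵥ z = 2 * (z ⬝ᵥ B *ᵥ z) := by
    intro z
    rw [Matrix.add_mulVec, dotProduct_add, transpose_quad]
    ring
  have hnn : ∀ z : Fin n → ℝ, 0 ≤ z ⬝ᵥ B *ᵥ z := by
    intro z
    have h := hB.posSemidef.dotProduct_mulVec_nonneg z
    simp only [star_trivial] at h
    rw [hBBx z] at h
    linarith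
  have hzero : ∀ z : Fin n → ℝ, z ⬝ᵥ B *ᵥ z = 0 → z = 0 := by
    intro z hz
    by_contra hz0
    have := hB.dotProduct_mulVec_pos hz0
    simp only [star_trivial] at this
    rw [hBBx z] at this
    simp [hz] at this
  have hx0 : x = 0 := hzero x (le_antisymm (by linarith [hnn x, hnn y]) (hnn x))
  have hy0 : y = 0 := hzero y (le_antisymm (by linarith [hnn x, hnn y]) (hnn y))
  funext i
  have : (v i).re = 0 := congrFun hx0 i
  have : (v i).im = 0 := congrFun hy0 i
  exact Complex.ext (congrFun hx0 i) (congrFun hy0 i)
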